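/- Let k ≥ 3, let G = (V,E) be a (k−2)-connected k-colorable chordal graph, and let T be a clique of G with T ≠ V such that (G,T) is obtained from (G−v, T∖{v}) by an introduce operation. Let α and β be k-colorings of G, and write α'' and β'' for their restrictions to V∖{v}. Suppose C^c_k(G,T) is a forest with a unique α-β-path P' (the unique path from the α-node to the β-node). Then: if C^c_k(G−v, T∖{v}) is a forest with a unique path P from the α''-node to the β''-node, then w(P') ≤ w(P) + 2; otherwise, w(P') = 0. -/

import Mathlib

open SimpleGraph

/-- A proper `k`-coloring of a graph. -/
def IsColoring {W : Type*} (G : SimpleGraph W) (k : ℕ) (α : W → Fin k) : Prop :=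
  ∀ u v : W, G.Adj u v → α u ≠ α v

/-- The `k`-color graph `C_k(G)`: nodes are proper `k`-colorings of `G`,
two colorings being adjacent iff they differ on exactly one vertex. -/
def colorGraph {W : Type*} (G : SimpleGraph W) (k : ℕ) :
    SimpleGraph {α : W → Fin k // IsColoring G k α} where
  Adj α β := ∃! w, α.1 w ≠ β.1 w
  symm := ⟨by
    rintro α β ⟨w, hw, hu⟩
    exact ⟨w, hw.symm, fun u hu' => hu u hu'.symm⟩⟩
  loopless := ⟨by
    rintro α ⟨w, hw, -⟩
    exact hw rfl⟩

/-- The subgraph of a labeled graph consisting of the edges between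
equally labeled nodes. -/
def sameLabelSub {N L : Type*} (H : SimpleGraph N) (f : N → L) : SimpleGraph N where
  Adj x y := H.Adj x y ∧ f x = f y
  symm := ⟨fun _ _ h => ⟨h.1.symm, h.2.symm⟩⟩
  loopless := ⟨fun x h => H.loopless.irrefl x h.1⟩

/-- The quotient graph obtained from a labeled graph by contracting every
(maximal) connected set of equally labeled nodes (i.e. every label component)
into a single node. -/
def quotGraph {N L : Type*} (H : SimpleGraph N) (f : N → L) :
    SimpleGraph (sameLabelSub H f).ConnectedComponent where
  Adj c d := c ≠ d ∧ ∃ a b, (sameLabelSub H f).connectedComponentMk a = c ∧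
      (sameLabelSub H f).connectedComponentMk b = d ∧ H.Adj a b
  symm := ⟨by
    rintro c d ⟨hne, a, b, ha, hb, hab⟩
    exact ⟨hne.symm, b, a, hb, ha, hab.symm⟩⟩
  loopless := ⟨fun c h => h.1 rfl⟩

/-- The common label of a label component. -/
def quotLabel {N L : Type*} (H : SimpleGraph N) (f : N → L) :
    (sameLabelSub H f).ConnectedComponent → L :=
  SimpleGraph.ConnectedComponent.lift f (by
    intro v w p hp
    clear hp
    induction p with
    | nil => rfl
    | cons h _ ih => exact h.2.trans ih)

/-- The label of a coloring: its restriction to the terminal set `T`. -/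
def csgLabelFun {W : Type*} (G : SimpleGraph W) (k : ℕ) (T : Set W) :
    {α : W → Fin k // IsColoring G k α} → (T → Fin k) :=
  fun α t => α.1 t.1

/-- The node set of the contracted solution graph: the label components. -/
abbrev CSGNode {W : Type*} (G : SimpleGraph W) (k : ℕ) (T : Set W) :=
  (sameLabelSub (colorGraph G k) (csgLabelFun G k T)).ConnectedComponent

/-- The contracted solution graph `C^c_k(G,T)`. -/
def CSG {W : Type*} (G : SimpleGraph W) (k : ℕ) (T : Set W) : SimpleGraph (CSGNode G k T) :=
  quotGraph (colorGraph G k) (csgLabelFun G k T)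

/-- The `γ`-node of the contracted solution graph: the label component containing `γ`. -/
def csgNode {W : Type*} (G : SimpleGraph W) (k : ℕ) (T : Set W)
    (γ : {α : W → Fin k // IsColoring G k α}) : CSGNode G k T :=
  (sameLabelSub (colorGraph G k) (csgLabelFun G k T)).connectedComponentMk γ

/-- The label of a node of the contracted solution graph: the common restriction
to `T` of its colorings. -/
def csgLabel {W : Type*} (G : SimpleGraph W) (k : ℕ) (T : Set W) :
    CSGNode G k T → (T → Fin k) :=
  quotLabel (colorGraph G k) (csgLabelFun G k T)

/-- The restriction of a proper coloring to an induced subgraph. -/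
def restrictColoring {W : Type*} (G : SimpleGraph W) (k : ℕ) (S : Set W)
    (γ : {α : W → Fin k // IsColoring G k α}) :
    {α : S → Fin k // IsColoring (G.induce S) k α} :=
  ⟨fun u => γ.1 u.1, fun u w h => γ.2 u.1 w.1 h⟩

/-- A graph is chordal if it contains no induced cycle of length greater than 3. -/
def Chordal {W : Type*} (G : SimpleGraph W) : Prop :=
  ∀ n : ℕ, 4 ≤ n → IsEmpty (SimpleGraph.cycleGraph n ↪g G)

/-- `S` is a vertex cut: `G - S` is disconnected. -/
def IsVertexCut {W : Type*} (G : SimpleGraph W) (S : Set W) : Prop :=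
  ¬ (G.induce Sᶜ).Preconnected

/-- `G` is `l`-connected. -/
def LConnected {W : Type*} (G : SimpleGraph W) (l : ℕ) : Prop :=
  G.Connected ∧ l + 1 ≤ Nat.card W ∧ ∀ S : Set W, IsVertexCut G S → l ≤ S.ncard

/-- A labeled graph `(H,ℓ)`, whose labels are `k`-colorings of the complete graph
on a vertex (type) `S`, is an `(|S|,k)`-color-complete graph. -/
def IsColorComplete {N S : Type*} (k : ℕ) (H : SimpleGraph N) (ℓ : N → S → Fin k) : Prop :=
  (∀ x, Function.Injective (ℓ x)) ∧
  (∀ f : S → Fin k, Function.Injective f → ∃! x, ℓ x = f) ∧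
  (∀ x y, H.Adj x y ↔ ∃! s, ℓ x s ≠ ℓ y s)

/-- The injective neighborhood property. -/
def INP {N L : Type*} (H : SimpleGraph N) (ℓ : N → L) : Prop :=
  ∀ u v w : N, H.Adj u v → H.Adj u w → v ≠ w → ℓ v ≠ ℓ w

/-- The weight `w(P)` of a walk `P` in a labeled graph: the sum over the vertices `x`
of `P` of the number of colors used by labels of neighbors of `x` in `P` but not by
the label of `x`. -/
noncomputable def walkWeight {N S : Type*} {k : ℕ} {G : SimpleGraph N} (ℓ : N → S → Fin k)
    {a b : N} (P : G.Walk a b) : ℕ :=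
  letI := Classical.decEq N
  ∑ x ∈ P.support.toFinset,
    ((⋃ y ∈ P.toSubgraph.neighborSet x, Set.range (ℓ y)) \ Set.range (ℓ x)).ncard

/-- The vertex set of `G - v`. -/
def delSet {V : Type*} (v : V) : Set V := {u | u ≠ v}

/-- The terminal set `T \ {v}`, viewed as a set of vertices of `G - v`. -/
def Tdel {V : Type*} (T : Set V) (v : V) : Set ↥(delSet v) := {u | u.1 ∈ T}

namespace S18
open SimpleGraph

section Generic
variable {W : Type*} {G : SimpleGraph W} {k : ℕ} {T : Set W}

lemma csgLabel_mk (γ : {f : W → Fin k // IsColoring G k f}) :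
    csgLabel G k T (csgNode G k T γ) = fun t : T => γ.1 t := rfl

lemma csgNode_eq_of_adj {γ δ : {f : W → Fin k // IsColoring G k f}}
    (h : (sameLabelSub (colorGraph G k) (csgLabelFun G k T)).Adj γ δ) :
    csgNode G k T γ = csgNode G k T δ :=
  ConnectedComponent.eq.mpr h.reachable

lemma label_injective (hT : G.IsClique T) (x : CSGNode G k T) :
    Function.Injective (csgLabel G k T x) := by
  induction x using ConnectedComponent.ind with
  | _ γ =>
    intro t1 t2 hval
    by_contra hne
    exact γ.2 t1.1 t2.1 (hT t1.2 t2.2 fun hc => hne (Subtype.ext hc)) hval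

lemma csg_adj_elim (hT : G.IsClique T) {x y : CSGNode G k T} (h : (CSG G k T).Adj x y) :
    ∃ (γ δ : {f : W → Fin k // IsColoring G k f}) (t : W) (ht : t ∈ T),
      csgNode G k T γ = x ∧ csgNode G k T δ = y ∧
      (∀ u : W, u ≠ t → γ.1 u = δ.1 u) ∧ γ.1 t ≠ δ.1 t ∧
      (∀ t' : T, δ.1 t ≠ γ.1 t') := by
  obtain ⟨hne, γ, δ, hγ, hδ, hadj⟩ := h
  obtain ⟨t, hts, huniq⟩ := hadj
  have hoth : ∀ u : W, u ≠ t → γ.1 u = δ.1 u := by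
    intro u hu
    by_contra hc
    exact hu (huniq u hc)
  have ht : t ∈ T := by
    by_contra htT
    apply hne
    rw [← hγ, ← hδ]
    apply csgNode_eq_of_adj
    refine ⟨⟨t, hts, huniq⟩, ?_⟩
    funext t'
    exact hoth t'.1 fun hc => htT (hc ▸ t'.2)
  refine ⟨γ, δ, t, ht, hγ, hδ, hoth, hts, ?_⟩
  intro t'
  rcases eq_or_ne (t' : W) t with h1 | h1
  · subst h1
    exact fun hc => hts hc.symm
  · rw [hoth t'.1 h1]
    exact δ.2 t t'.1 (hT ht t'.2 (Ne.symm h1))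

end Generic
end S18
namespace S18
open SimpleGraph

section Restrict
variable {V : Type*} [DecidableEq V] {G : SimpleGraph V} {k : ℕ} {T : Set V} {v : V}

/-- One step of restriction: adjacent same-label colorings restrict to the same
label component of `G - v`. -/
lemma res_step (hv : v ∈ T) {γ δ : {f : V → Fin k // IsColoring G k f}}
    (h : (sameLabelSub (colorGraph G k) (csgLabelFun G k T)).Adj γ δ) :
    csgNode (G.induce (delSet v)) k (Tdel T v) (restrictColoring G k (delSet v) γ) =
    csgNode (G.induce (delSet v)) k (Tdel T v) (restrictColoring G k (delSet v) δ) := by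
  obtain ⟨⟨w, hw, huniq⟩, hlab⟩ := h
  have hwT : w ∉ T := by
    intro hwT
    exact hw (congrFun hlab (⟨w, hwT⟩ : T))
  have hwv : w ≠ v := fun hc => hwT (hc ▸ hv)
  apply csgNode_eq_of_adj
  constructor
  · refine ⟨⟨w, hwv⟩, hw, ?_⟩
    intro u hu
    exact Subtype.ext (huniq u.1 hu)
  · funext t
    exact congrFun hlab ⟨t.1.1, t.2⟩

/-- The restriction map on label components. -/
def resC (G : SimpleGraph V) (k : ℕ) (T : Set V) (v : V) (hv : v ∈ T) :
    CSGNode G k T → CSGNode (G.induce (delSet v)) k (Tdel T v) :=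
  ConnectedComponent.lift
    (fun γ => csgNode (G.induce (delSet v)) k (Tdel T v) (restrictColoring G k (delSet v) γ))
    (by
      intro γ δ p hp
      clear hp
      induction p with
      | nil => rfl
      | cons h p ih => exact (res_step hv h).trans ih)

@[simp] lemma resC_mk (hv : v ∈ T) (γ : {f : V → Fin k // IsColoring G k f}) :
    resC G k T v hv (csgNode G k T γ) =
      csgNode (G.induce (delSet v)) k (Tdel T v) (restrictColoring G k (delSet v) γ) := rfl

/-- Extension of a coloring of `G - v` by a color for `v`. -/
def extFun (v : V) (δ : ↥(delSet v) → Fin k) (c : Fin k) : V → Fin k :=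
  fun u => if h : u = v then c else δ ⟨u, h⟩

lemma mem_delSet {u : V} : u ∈ delSet v ↔ u ≠ v := Iff.rfl

@[simp] lemma extFun_v (δ : ↥(delSet v) → Fin k) (c : Fin k) : extFun v δ c v = c := by
  simp [extFun]

lemma extFun_mem (δ : ↥(delSet v) → Fin k) (c : Fin k) {u : V} (h : u ∈ delSet v) :
    extFun v δ c u = δ ⟨u, h⟩ := dif_neg h

lemma extFun_res (γ : {f : V → Fin k // IsColoring G k f}) :
    extFun v ((restrictColoring G k (delSet v) γ).1) (γ.1 v) = γ.1 := by
  funext u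
  by_cases h : u ∈ delSet v
  · rw [extFun_mem _ _ h]; rfl
  · have : u = v := not_not.mp h
    subst this
    simp

lemma res_ext {δ : ↥(delSet v) → Fin k} {c : Fin k} (h : IsColoring G k (extFun v δ c)) :
    (restrictColoring G k (delSet v) ⟨extFun v δ c, h⟩).1 = δ := by
  funext u
  exact extFun_mem δ c u.2

lemma induce_adj {s : Set V} {a b : ↥s} : (G.induce s).Adj a b ↔ G.Adj a.1 b.1 := Iff.rfl

/-- Extension is a proper coloring iff the color is proper for `v`. -/
lemma extFun_coloring_iff {δ : ↥(delSet v) → Fin k} (hδ : IsColoring (G.induce (delSet v)) k δ)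
    {c : Fin k} :
    IsColoring G k (extFun v δ c) ↔ ∀ u (h : G.Adj v u), c ≠ δ ⟨u, h.ne'⟩ := by
  constructor
  · intro hcol u h
    have := hcol v u h
    rwa [extFun_v, extFun_mem δ c h.ne'] at this
  · intro hc u w hadj
    by_cases hu : u = v
    · subst hu
      rw [extFun_v, extFun_mem δ c hadj.ne']
      exact hc w hadj
    · by_cases hw : w = v
      · subst hw
        rw [extFun_v, extFun_mem δ c hadj.ne]
        exact Ne.symm (hc u hadj.symm)
      · rw [extFun_mem δ c hu, extFun_mem δ c hw]
        exact hδ ⟨u, hu⟩ ⟨w, hw⟩ hadj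

end Restrict
end S18
namespace S18
open SimpleGraph

section Lift
variable {V : Type*} [DecidableEq V] {G : SimpleGraph V} {k : ℕ} {T : Set V} {v : V}

/-- In the introduce situation, `T` is the closed neighborhood of `v`. -/
lemma adj_v_iff (hT : G.IsClique T) (hv : v ∈ T) (hN : ∀ u : V, G.Adj v u → u ∈ T)
    (u : V) : G.Adj v u ↔ (u ∈ T ∧ u ≠ v) := by
  constructor
  · intro h
    exact ⟨hN u h, h.ne'⟩
  · rintro ⟨hu, hne⟩
    exact hT hv hu (Ne.symm hne)

/-- Extension properness in terms of the label of the component of `δ`. -/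
lemma extFun_coloring_iff' (hT : G.IsClique T) (hv : v ∈ T) (hN : ∀ u : V, G.Adj v u → u ∈ T)
    (δ : {f : ↥(delSet v) → Fin k // IsColoring (G.induce (delSet v)) k f}) (c : Fin k) :
    IsColoring G k (extFun v δ.1 c) ↔
      c ∉ Set.range (fun t : (Tdel T v) => δ.1 t.1) := by
  rw [extFun_coloring_iff δ.2]
  constructor
  · rintro h ⟨t, ht⟩
    have hadj : G.Adj v t.1.1 := (adj_v_iff hT hv hN t.1.1).mpr ⟨t.2, t.1.2⟩
    exact h t.1.1 hadj (ht.symm.trans (by congr))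
  · intro h u hadj hc
    refine h ⟨⟨⟨u, hadj.ne'⟩, hN u hadj⟩, hc.symm⟩

/-- Lifting a walk in the same-label subgraph of `G - v` to one of `G`,
given a fixed color for `v`. -/
lemma lift_component {δ₁ δ₂ : {f : ↥(delSet v) → Fin k // IsColoring (G.induce (delSet v)) k f}}
    (hv : v ∈ T) (hN : ∀ u : V, G.Adj v u → u ∈ T)
    (p : (sameLabelSub (colorGraph (G.induce (delSet v)) k)
        (csgLabelFun (G.induce (delSet v)) k (Tdel T v))).Walk δ₁ δ₂)
    (c : Fin k) (h1 : IsColoring G k (extFun v δ₁.1 c)) :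
    ∃ h2 : IsColoring G k (extFun v δ₂.1 c),
      csgNode G k T ⟨extFun v δ₁.1 c, h1⟩ = csgNode G k T ⟨extFun v δ₂.1 c, h2⟩ := by
  induction p with
  | nil => exact ⟨h1, rfl⟩
  | @cons δ₁ δm δ₂ h p ih =>
    obtain ⟨⟨w, hw, huniq⟩, hlab⟩ := h
    -- transfer properness along the step
    have hmid : IsColoring G k (extFun v δm.1 c) := by
      rw [extFun_coloring_iff δm.2]
      intro u hadj hc
      rw [extFun_coloring_iff δ₁.2] at h1
      refine h1 u hadj ?_
      have : δ₁.1 ⟨u, hadj.ne'⟩ = δm.1 ⟨u, hadj.ne'⟩ :=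
        congrFun hlab ⟨⟨u, hadj.ne'⟩, hN u hadj⟩
      rw [this]; exact hc
    have hstep : (sameLabelSub (colorGraph G k) (csgLabelFun G k T)).Adj
        ⟨extFun v δ₁.1 c, h1⟩ ⟨extFun v δm.1 c, hmid⟩ := by
      constructor
      · refine ⟨w.1, ?_, ?_⟩
        · show extFun v δ₁.1 c w.1 ≠ extFun v δm.1 c w.1
          rw [extFun_mem _ _ w.2, extFun_mem _ _ w.2]
          simpa using hw
        · intro u hu
          replace hu : extFun v δ₁.1 c u ≠ extFun v δm.1 c u := hu
          by_cases huv : u = v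
          · subst huv; simp at hu
          · rw [extFun_mem _ _ huv, extFun_mem _ _ huv] at hu
            exact congrArg Subtype.val (huniq ⟨u, huv⟩ hu)
      · funext t
        show extFun v δ₁.1 c t.1 = extFun v δm.1 c t.1
        by_cases htv : t.1 = v
        · rw [htv]; simp
        · rw [extFun_mem _ _ htv, extFun_mem _ _ htv]
          exact congrFun hlab ⟨⟨t.1, htv⟩, t.2⟩
    obtain ⟨h2, heq⟩ := ih hmid
    exact ⟨h2, (csgNode_eq_of_adj hstep).trans heq⟩

/-- Colorings with the same restriction component and the same color at `v`
lie in the same label component. -/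
lemma same_up_comp (hv : v ∈ T) (hN : ∀ u : V, G.Adj v u → u ∈ T)
    {γ δ : {f : V → Fin k // IsColoring G k f}}
    (hres : csgNode (G.induce (delSet v)) k (Tdel T v) (restrictColoring G k (delSet v) γ) =
      csgNode (G.induce (delSet v)) k (Tdel T v) (restrictColoring G k (delSet v) δ))
    (hvc : γ.1 v = δ.1 v) :
    csgNode G k T γ = csgNode G k T δ := by
  obtain ⟨p⟩ := ConnectedComponent.exact hres
  have h1 : IsColoring G k (extFun v (restrictColoring G k (delSet v) γ).1 (γ.1 v)) := by
    rw [extFun_res]; exact γ.2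
  obtain ⟨h2, heq⟩ := lift_component hv hN p (γ.1 v) h1
  have e1 : csgNode G k T γ = csgNode G k T ⟨extFun v (restrictColoring G k (delSet v) γ).1 (γ.1 v), h1⟩ := by
    congr 1
    exact Subtype.ext (extFun_res γ).symm
  have e2 : csgNode G k T ⟨extFun v (restrictColoring G k (delSet v) δ).1 (γ.1 v), h2⟩ = csgNode G k T δ := by
    congr 1
    refine Subtype.ext ?_
    show extFun v (restrictColoring G k (delSet v) δ).1 (γ.1 v) = δ.1
    rw [hvc]
    exact extFun_res δ
  exact e1.trans (heq.trans e2)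

/-- Two distinct components with the same restriction component are adjacent
(via recoloring `v`), and their labels differ at `v`. -/
lemma adj_of_resC_eq (hT : G.IsClique T) (hv : v ∈ T) (hN : ∀ u : V, G.Adj v u → u ∈ T)
    {x y : CSGNode G k T} (hne : x ≠ y)
    (hres : resC G k T v hv x = resC G k T v hv y) :
    (CSG G k T).Adj x y ∧
      csgLabel G k T x ⟨v, hv⟩ ≠ csgLabel G k T y ⟨v, hv⟩ := by
  induction x using ConnectedComponent.ind with
  | _ γ =>
  induction y using ConnectedComponent.ind with
  | _ δ =>
  have hres' : csgNode (G.induce (delSet v)) k (Tdel T v) (restrictColoring G k (delSet v) γ) =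
      csgNode (G.induce (delSet v)) k (Tdel T v) (restrictColoring G k (delSet v) δ) := hres
  have hvc : γ.1 v ≠ δ.1 v := by
    intro hvc
    exact hne (same_up_comp hv hN hres' hvc)
  have hprop : IsColoring G k (extFun v (restrictColoring G k (delSet v) γ).1 (δ.1 v)) := by
    rw [extFun_coloring_iff (restrictColoring G k (delSet v) γ).2]
    intro u hadj hc
    -- (res γ) at u equals (res δ) at u since labels agree on T'
    have hlabeq : csgLabel _ k _ (csgNode (G.induce (delSet v)) k (Tdel T v) (restrictColoring G k (delSet v) γ)) =
        csgLabel _ k _ (csgNode (G.induce (delSet v)) k (Tdel T v) (restrictColoring G k (delSet v) δ)) :=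
      congrArg _ hres'
    have heq2 : γ.1 u = δ.1 u := congrFun hlabeq ⟨⟨u, hadj.ne'⟩, hN u hadj⟩
    replace hc : δ.1 v = γ.1 u := hc
    rw [heq2] at hc
    exact δ.2 v u hadj hc
  set γ₂ : {f : V → Fin k // IsColoring G k f} := ⟨_, hprop⟩ with hγ₂
  have hγ₂y : csgNode G k T γ₂ = csgNode G k T δ := by
    apply same_up_comp hv hN
    · have hre : restrictColoring G k (delSet v) γ₂ = restrictColoring G k (delSet v) γ :=
        Subtype.ext (res_ext hprop)
      rw [hre]
      exact hres'
    · show extFun v (restrictColoring G k (delSet v) γ).1 (δ.1 v) v = δ.1 v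
      rw [extFun_v]
  have hadjup : (colorGraph G k).Adj γ γ₂ := by
    refine ⟨v, ?_, ?_⟩
    · show γ.1 v ≠ extFun v (restrictColoring G k (delSet v) γ).1 (δ.1 v) v
      rw [extFun_v]
      exact hvc
    · intro u hu
      by_contra huv
      replace hu : γ.1 u ≠ extFun v (restrictColoring G k (delSet v) γ).1 (δ.1 v) u := hu
      rw [extFun_mem _ _ huv] at hu
      exact hu rfl
  constructor
  · exact ⟨hne, γ, γ₂, rfl, hγ₂y, hadjup⟩
  · exact hvc

/-- The color of `v` in the label of a node is not used in the label of its
restriction component. -/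
lemma vcolor_not_mem (hT : G.IsClique T) (hv : v ∈ T) (x : CSGNode G k T) :
    csgLabel G k T x ⟨v, hv⟩ ∉
      Set.range (csgLabel (G.induce (delSet v)) k (Tdel T v) (resC G k T v hv x)) := by
  induction x using ConnectedComponent.ind with
  | _ γ =>
  rintro ⟨t, ht⟩
  have hadj : G.Adj v t.1.1 := hT hv t.2 (Ne.symm t.1.2)
  exact γ.2 v t.1.1 hadj ht.symm

end Lift
end S18
namespace S18
open SimpleGraph

section Cards
variable {V : Type*} {G : SimpleGraph V} {k : ℕ} {T : Set V} {v : V}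

lemma T_diff_cut (hTne : T ≠ Set.univ) (hv : v ∈ T) (hN : ∀ u : V, G.Adj v u → u ∈ T) :
    IsVertexCut G (T \ {v}) := by
  intro hpre
  obtain ⟨w, hw⟩ := (Set.ne_univ_iff_exists_notMem T).mp hTne
  have hvc : v ∈ (T \ {v})ᶜ := by simp
  have hwc : w ∈ (T \ {v})ᶜ := fun hc => hw hc.1
  obtain ⟨p⟩ := hpre ⟨v, hvc⟩ ⟨w, hwc⟩
  have key : ∀ (x : ↥(T \ {v})ᶜ) (_ : (G.induce (T \ {v})ᶜ).Walk ⟨v, hvc⟩ x),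
      x = ⟨v, hvc⟩ := by
    intro x q
    cases q with
    | nil => rfl
    | @cons _ u _ h q =>
      have hadj : G.Adj v u.1 := h
      exact absurd ⟨hN u.1 hadj, hadj.ne'⟩ u.2
  have := key _ p
  rw [Subtype.mk.injEq] at this
  exact hw (this ▸ hv)

lemma T_ncard_lower [Fintype V] (hconn : LConnected G (k - 2)) (hTne : T ≠ Set.univ)
    (hv : v ∈ T) (hN : ∀ u : V, G.Adj v u → u ∈ T) :
    k - 1 ≤ T.ncard ∧ (T \ {v}).ncard = T.ncard - 1 := by
  have h1 : k - 2 ≤ (T \ {v}).ncard := hconn.2.2 _ (T_diff_cut hTne hv hN)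
  have h2 : insert v (T \ {v}) = T := by
    rw [Set.insert_diff_singleton]
    exact Set.insert_eq_self.mpr hv
  have h3 := Set.ncard_insert_of_notMem (show v ∉ T \ {v} by simp) (Set.toFinite (T \ {v}))
  rw [h2] at h3
  constructor
  · omega
  · omega

lemma range_label_ncard {W : Type*} {G : SimpleGraph W} {T' : Set W} (hT : G.IsClique T')
    (x : CSGNode G k T') :
    (Set.range (csgLabel G k T' x)).ncard = T'.ncard := by
  rw [← Set.image_univ, Set.ncard_image_of_injective _ (label_injective hT x),
    Set.ncard_univ, Nat.card_coe_set_eq]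

lemma Tdel_ncard : (Tdel T v).ncard = (T \ {v}).ncard := by
  have himg : Subtype.val '' (Tdel T v) = T \ {v} := by
    ext u
    constructor
    · rintro ⟨t, ht, rfl⟩
      exact ⟨ht, t.2⟩
    · rintro ⟨hu, hne⟩
      exact ⟨⟨u, hne⟩, hu, rfl⟩
  rw [← himg, Set.ncard_image_of_injective _ Subtype.val_injective]

lemma compl_ncard (s : Set (Fin k)) : (Set.univ \ s).ncard = k - s.ncard := by
  rw [Set.ncard_diff (Set.subset_univ s) (Set.toFinite _)]
  congr 1
  simp [Set.ncard_univ]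

lemma Tdel_clique (hT : G.IsClique T) : (G.induce (delSet v)).IsClique (Tdel T v) := by
  intro a ha b hb hne
  exact hT ha hb (fun hc => hne (Subtype.ext hc))

lemma up_edge_Tcard (hT : G.IsClique T) {x y : CSGNode G k T}
    (h : (CSG G k T).Adj x y) : T.ncard < k := by
  obtain ⟨γ, δ, t, ht, hγ, hδ, hoth, hts, hnr⟩ := csg_adj_elim hT h
  have hmiss : δ.1 t ∉ Set.range (csgLabel G k T x) := by
    rintro ⟨t', ht'⟩
    rw [← hγ] at ht'
    exact hnr t' ht'.symm
  have hss : Set.range (csgLabel G k T x) ⊂ Set.univ := by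
    refine ⟨Set.subset_univ _, fun hsub => hmiss (hsub (Set.mem_univ _))⟩
  have := Set.ncard_lt_ncard hss (Set.toFinite _)
  rw [range_label_ncard hT x] at this
  simpa [Set.ncard_univ, Nat.card_eq_fintype_card] using this

end Cards
end S18
namespace S18
open SimpleGraph

section WalkLemmas
variable {X : Type*} {H : SimpleGraph X}

lemma mem_support_of_mem_edge {a b : X} {p : H.Walk a b} {e : Sym2 X} (he : e ∈ p.edges)
    {z : X} (hz : z ∈ e) : z ∈ p.support := by
  induction e with
  | _ x y =>
    rcases Sym2.mem_iff.mp hz with rfl | rfl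
    · exact p.fst_mem_support_of_mem_edges he
    · exact p.snd_mem_support_of_mem_edges he

lemma exists_toSubgraph_adj :
    ∀ {a b : X} (p : H.Walk a b), ¬ p.Nil → ∀ x ∈ p.support, ∃ y, p.toSubgraph.Adj x y := by
  intro a b p
  induction p with
  | nil => intro h; exact absurd Walk.nil_nil h
  | @cons a m b h q ih =>
    intro _ x hx
    rw [Walk.support_cons, List.mem_cons] at hx
    rcases hx with rfl | hx
    · exact ⟨m, Or.inl (by simp)⟩
    · by_cases hq : q.Nil
      · have hxm : x = m := by
          cases q with
          | nil => simpa using hx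
          | cons h2 q2 => exact absurd hq Walk.not_nil_cons
        subst hxm
        exact ⟨a, Or.inl (by simp [Sym2.eq_swap])⟩
      · obtain ⟨y, hy⟩ := ih hq x hx
        exact ⟨y, Or.inr hy⟩

/-- In a forest, any two nodes of a path that are adjacent in the graph are
joined by an edge of the path. -/
lemma edge_mem_of_adj [DecidableEq X] (hac : H.IsAcyclic) {a b : X} {p : H.Walk a b}
    (hp : p.IsPath) {x y : X} (hx : x ∈ p.support) (hy : y ∈ p.support)
    (hadj : H.Adj x y) : s(x, y) ∈ p.edges := by
  by_cases hxy : x ∈ (p.takeUntil y hy).support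
  · have hq : ((p.takeUntil y hy).dropUntil x hxy).IsPath :=
      (hp.takeUntil hy).dropUntil hxy
    have huniq := hac.path_unique ⟨_, hq⟩ (Path.singleton hadj)
    have hedge : s(x, y) ∈ ((p.takeUntil y hy).dropUntil x hxy).edges := by
      rw [Subtype.mk.injEq] at huniq
      rw [huniq]
      simp [Path.singleton]
    exact (p.edges_takeUntil_subset hy) ((Walk.edges_dropUntil_subset _ hxy) hedge)
  · have hxd : x ∈ (p.dropUntil y hy).support := by
      have h0 : x ∈ ((p.takeUntil y hy).append (p.dropUntil y hy)).support := by
        rw [Walk.take_spec p hy]; exact hx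
      rcases (Walk.mem_support_append_iff _ _).mp h0 with h1 | h1
      · exact absurd h1 hxy
      · exact h1
    have hq : ((p.dropUntil y hy).takeUntil x hxd).IsPath :=
      (hp.dropUntil hy).takeUntil hxd
    have huniq := hac.path_unique ⟨_, hq⟩ (Path.singleton hadj.symm)
    have hedge : s(y, x) ∈ ((p.dropUntil y hy).takeUntil x hxd).edges := by
      rw [Subtype.mk.injEq] at huniq
      rw [huniq]
      simp [Path.singleton]
    rw [Sym2.eq_swap]
    exact (Walk.edges_dropUntil_subset _ hy) ((Walk.edges_takeUntil_subset _ hxd) hedge)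

/-- In a path, at most one edge contains the initial vertex. -/
lemma start_edge_unique : ∀ {a b : X} {p : H.Walk a b}, p.IsPath →
    ∀ e1 ∈ p.edges, ∀ e2 ∈ p.edges, a ∈ e1 → a ∈ e2 → e1 = e2 := by
  intro a b p
  induction p with
  | nil => intro _ e1 he1; simp at he1
  | @cons a m b h q ih =>
    intro hp e1 he1 e2 he2 ha1 ha2
    have hnot : ∀ e ∈ q.edges, a ∉ e := by
      intro e he hae
      exact ((Walk.cons_isPath_iff h q).mp hp).2 (mem_support_of_mem_edge he hae)
    rw [Walk.edges_cons, List.mem_cons] at he1 he2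
    rcases he1 with rfl | he1
    · rcases he2 with rfl | he2
      · rfl
      · exact absurd ha2 (hnot _ he2)
    · exact absurd ha1 (hnot _ he1)

/-- A vertex of a path is in at most two of its edges. -/
lemma no_three {a b : X} {p : H.Walk a b} (hp : p.IsPath) {z : X} {e1 e2 e3 : Sym2 X}
    (he1 : e1 ∈ p.edges) (he2 : e2 ∈ p.edges) (he3 : e3 ∈ p.edges)
    (h12 : e1 ≠ e2) (h13 : e1 ≠ e3) (h23 : e2 ≠ e3)
    (hz1 : z ∈ e1) (hz2 : z ∈ e2) (hz3 : z ∈ e3) : False := by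
  induction p with
  | nil => simp at he1
  | @cons a m b h q ih =>
    have hq : q.IsPath := hp.of_cons
    have hnota : ∀ e ∈ q.edges, a ∉ e := by
      intro e he hae
      exact ((Walk.cons_isPath_iff h q).mp hp).2 (mem_support_of_mem_edge he hae)
    rw [Walk.edges_cons, List.mem_cons] at he1 he2 he3
    rcases he1 with rfl | he1 <;> rcases he2 with rfl | he2 <;> rcases he3 with rfl | he3
    · exact h12 rfl
    · exact h12 rfl
    · exact h13 rfl
    · rcases Sym2.mem_iff.mp hz1 with rfl | rfl
      · exact hnota _ he2 hz2
      · exact h23 (start_edge_unique hq _ he2 _ he3 hz2 hz3)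
    · exact h23 rfl
    · rcases Sym2.mem_iff.mp hz2 with rfl | rfl
      · exact hnota _ he1 hz1
      · exact h13 (start_edge_unique hq _ he1 _ he3 hz1 hz3)
    · rcases Sym2.mem_iff.mp hz3 with rfl | rfl
      · exact hnota _ he1 hz1
      · exact h12 (start_edge_unique hq _ he1 _ he2 hz1 hz2)
    · exact ih hq he1 he2 he3

/-- An acyclic graph contains no triangle. -/
lemma no_triangle (hac : H.IsAcyclic) {a b c : X} (hab : H.Adj a b) (hbc : H.Adj b c)
    (hca : H.Adj c a) : False := by
  have h1 : s(a, b) ≠ s(b, c) := by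
    intro h
    rw [Sym2.eq_iff] at h
    rcases h with ⟨ha, _⟩ | ⟨ha, _⟩
    · exact hab.ne ha
    · exact hca.ne ha.symm
  have h2 : s(a, b) ≠ s(c, a) := by
    intro h
    rw [Sym2.eq_iff] at h
    rcases h with ⟨ha, hb⟩ | ⟨_, hb⟩
    · exact hca.ne ha.symm
    · exact hbc.ne hb
  have h3 : s(b, c) ≠ s(c, a) := by
    intro h
    rw [Sym2.eq_iff] at h
    rcases h with ⟨ha, _⟩ | ⟨ha, _⟩
    · exact hbc.ne ha
    · exact hab.ne ha.symm
  have hcyc : (Walk.cons hab (Walk.cons hbc (Walk.cons hca Walk.nil))).IsCycle := by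
    rw [Walk.isCycle_def]
    refine ⟨?_, by simp, ?_⟩
    · rw [Walk.isTrail_def, Walk.edges_cons, Walk.edges_cons, Walk.edges_cons, Walk.edges_nil]
      refine List.nodup_cons.mpr ⟨?_, List.nodup_cons.mpr ⟨?_, List.nodup_singleton _⟩⟩
      · intro hmem
        rcases List.mem_cons.mp hmem with h | h
        · exact h1 h
        · exact h2 (List.mem_singleton.mp h)
      · intro hmem
        exact h3 (List.mem_singleton.mp hmem)
    · rw [Walk.support_cons, Walk.support_cons, Walk.support_cons, Walk.support_nil,
        List.tail_cons]
      refine List.nodup_cons.mpr ⟨?_, List.nodup_cons.mpr ⟨?_, List.nodup_singleton _⟩⟩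
      · intro hmem
        rcases List.mem_cons.mp hmem with h | h
        · exact hbc.ne h
        · exact hab.ne' (List.mem_singleton.mp h)
      · intro hmem
        exact hca.ne (List.mem_singleton.mp hmem)
  exact hac _ hcyc

end WalkLemmas
end S18
namespace S18
open SimpleGraph

section Proj
variable {V : Type*} [DecidableEq V] {G : SimpleGraph V} {k : ℕ} {T : Set V} {v : V}

lemma proj_adj_or (hT : G.IsClique T) (hv : v ∈ T) {x y : CSGNode G k T}
    (h : (CSG G k T).Adj x y) :
    resC G k T v hv x = resC G k T v hv y ∨
      (CSG (G.induce (delSet v)) k (Tdel T v)).Adj (resC G k T v hv x) (resC G k T v hv y) := by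
  obtain ⟨γ, δ, t, ht, hγ, hδ, hoth, hts, hnr⟩ := csg_adj_elim hT h
  subst hγ hδ
  by_cases htv : t = v
  · left
    have hre : restrictColoring G k (delSet v) γ = restrictColoring G k (delSet v) δ := by
      apply Subtype.ext
      funext u
      exact hoth u.1 (fun hc => u.2 (hc.trans htv))
    rw [resC_mk, resC_mk, hre]
  · right
    refine ⟨?_, restrictColoring G k (delSet v) γ, restrictColoring G k (delSet v) δ, rfl, rfl, ?_⟩
    · intro hc
      have hlab := congrArg (csgLabel (G.induce (delSet v)) k (Tdel T v)) hc
      have hvals : γ.1 t = δ.1 t := congrFun hlab ⟨⟨t, htv⟩, ht⟩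
      exact hts hvals
    · refine ⟨⟨t, htv⟩, hts, ?_⟩
      intro u hu
      by_contra hne2
      exact hu (hoth u.1 (fun hc => hne2 (Subtype.ext hc)))

end Proj

open Classical in
/-- Projection of a walk in `C^c_k(G,T)` to a walk in `C^c_k(G-v, T-v)`. -/
noncomputable def projW {V : Type*} [DecidableEq V] {G : SimpleGraph V} {k : ℕ} {T : Set V}
    {v : V} (hT : G.IsClique T) (hv : v ∈ T) :
    ∀ {x y : CSGNode G k T}, (CSG G k T).Walk x y →
      (CSG (G.induce (delSet v)) k (Tdel T v)).Walk (resC G k T v hv x) (resC G k T v hv y)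
  | _, _, .nil => .nil
  | x, y, @Walk.cons _ _ _ m _ h p =>
    if he : resC G k T v hv x = resC G k T v hv m then (projW hT hv p).copy he.symm rfl
    else .cons ((proj_adj_or hT hv h).resolve_left he) (projW hT hv p)

section Proj2
variable {V : Type*} [DecidableEq V] {G : SimpleGraph V} {k : ℕ} {T : Set V} {v : V}

lemma projW_support (hT : G.IsClique T) (hv : v ∈ T) {x y : CSGNode G k T}
    (p : (CSG G k T).Walk x y) :
    ∀ z ∈ p.support, resC G k T v hv z ∈ (projW hT hv p).support := by
  induction p with
  | nil =>
    intro z hz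
    rw [Walk.support_nil, List.mem_singleton] at hz
    subst hz
    simp [projW]
  | @cons x m y h p ih =>
    intro z hz
    rw [Walk.support_cons, List.mem_cons] at hz
    simp only [projW]
    split
    case isTrue he =>
      rw [Walk.support_copy]
      rcases hz with rfl | hz
      · rw [he]
        exact Walk.start_mem_support _
      · exact ih z hz
    case isFalse he =>
      rw [Walk.support_cons]
      rcases hz with rfl | hz
      · exact List.mem_cons_self
      · exact List.mem_cons_of_mem _ (ih z hz)

lemma projW_support_rev (hT : G.IsClique T) (hv : v ∈ T) {x y : CSGNode G k T}
    (p : (CSG G k T).Walk x y) :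
    ∀ d ∈ (projW hT hv p).support, ∃ z ∈ p.support, resC G k T v hv z = d := by
  induction p with
  | nil =>
    intro d hd
    simp only [projW, Walk.support_nil, List.mem_singleton] at hd
    subst hd
    exact ⟨_, Walk.start_mem_support _, rfl⟩
  | @cons x m y h p ih =>
    intro d hd
    simp only [projW] at hd
    split at hd
    case isTrue he =>
      rw [Walk.support_copy] at hd
      obtain ⟨z, hz, hzd⟩ := ih d hd
      exact ⟨z, by rw [Walk.support_cons]; exact List.mem_cons_of_mem _ hz, hzd⟩
    case isFalse he =>
      rw [Walk.support_cons, List.mem_cons] at hd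
      rcases hd with rfl | hd
      · exact ⟨x, by simp, rfl⟩
      · obtain ⟨z, hz, hzd⟩ := ih d hd
        exact ⟨z, by rw [Walk.support_cons]; exact List.mem_cons_of_mem _ hz, hzd⟩

lemma projW_edges (hT : G.IsClique T) (hv : v ∈ T) {x y : CSGNode G k T}
    (p : (CSG G k T).Walk x y) :
    ∀ e ∈ (projW hT hv p).edges, ∃ a b, s(a, b) ∈ p.edges ∧
      e = s(resC G k T v hv a, resC G k T v hv b) := by
  induction p with
  | nil =>
    intro e he
    simp [projW] at he
  | @cons x m y h p ih =>
    intro e he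
    simp only [projW] at he
    split at he
    case isTrue h' =>
      rw [Walk.edges_copy] at he
      obtain ⟨a, b, hab, he'⟩ := ih e he
      exact ⟨a, b, by rw [Walk.edges_cons]; exact List.mem_cons_of_mem _ hab, he'⟩
    case isFalse h' =>
      rw [Walk.edges_cons, List.mem_cons] at he
      rcases he with rfl | he
      · exact ⟨x, m, by rw [Walk.edges_cons]; exact List.mem_cons_self, rfl⟩
      · obtain ⟨a, b, hab, he'⟩ := ih e he
        exact ⟨a, b, by rw [Walk.edges_cons]; exact List.mem_cons_of_mem _ hab, he'⟩

lemma projW_isPath (hforest : IsAcyclic (CSG G k T)) (hT : G.IsClique T) (hv : v ∈ T)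
    (hN : ∀ u : V, G.Adj v u → u ∈ T) {x y : CSGNode G k T}
    {p : (CSG G k T).Walk x y} (hp : p.IsPath) : (projW hT hv p).IsPath := by
  classical
  induction p with
  | nil => simp only [projW]; exact Walk.IsPath.nil
  | @cons x m y h p ih =>
    have hq : p.IsPath := hp.of_cons
    have hx : x ∉ p.support := ((Walk.cons_isPath_iff h p).mp hp).2
    simp only [projW]
    split
    case isTrue he =>
      simp only [Walk.isPath_copy]
      exact ih hq
    case isFalse he =>
      rw [Walk.cons_isPath_iff]
      refine ⟨ih hq, ?_⟩
      intro hmem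
      obtain ⟨z, hz, hzd⟩ := projW_support_rev hT hv p _ hmem
      have hzx : z ≠ x := fun hc => hx (hc ▸ hz)
      obtain ⟨hadjxz, -⟩ := adj_of_resC_eq hT hv hN (Ne.symm hzx) hzd.symm
      -- x adjacent to z; unique path forces z = m, contradiction
      have hq' : (p.takeUntil z hz).IsPath := hq.takeUntil hz
      have hxq' : x ∉ (p.takeUntil z hz).support :=
        fun hc => hx ((Walk.support_takeUntil_subset p hz) hc)
      have hpath : (Walk.cons h (p.takeUntil z hz)).IsPath :=
        (Walk.cons_isPath_iff _ _).mpr ⟨hq', hxq'⟩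
      have huniq := hforest.path_unique ⟨_, hpath⟩ (Path.singleton hadjxz)
      have hlen := congrArg (fun q : (CSG G k T).Path x z => q.1.length) huniq
      simp only [Walk.length_cons, Path.singleton, Walk.length_nil] at hlen
      have hzm : m = z :=
        Walk.eq_of_length_eq_zero (p := p.takeUntil z hz) (by omega)
      exact he (hzm ▸ hzd.symm ▸ rfl)

end Proj2
end S18
namespace S18
open SimpleGraph

section Weight
variable {N S : Type*} {k : ℕ} {G : SimpleGraph N}

lemma walkWeight_nil_walk (ℓ : N → S → Fin k) {a b : N} (p : G.Walk a b) (hnil : p.Nil) :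
    walkWeight ℓ p = 0 := by
  cases p with
  | nil =>
    unfold walkWeight
    apply Finset.sum_eq_zero
    intro x _
    have hns : (Walk.nil : G.Walk a a).toSubgraph.neighborSet x = ∅ := by
      ext z
      simp [Walk.toSubgraph, SimpleGraph.singletonSubgraph, Subgraph.neighborSet]
    rw [hns]
    simp
  | cons h q => exact absurd hnil Walk.not_nil_cons

end Weight

section UpWeight
variable {V : Type*} [DecidableEq V] {G : SimpleGraph V} {k : ℕ} {T : Set V} {v : V}

/-- In the `|T| = k-1` case, every vertex of a non-trivial path in
`C^c_k(G,T)` has weight exactly 1. -/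
lemma up_weight (hT : G.IsClique T) (hcard : T.ncard = k - 1) (hk : 3 ≤ k)
    {x y : CSGNode G k T} (P' : (CSG G k T).Walk x y) (hP' : P'.IsPath) (hnil : ¬ P'.Nil) :
    walkWeight (csgLabel G k T) P' = P'.length + 1 := by
  classical
  have step : ∀ z ∈ P'.support,
      ((⋃ y ∈ P'.toSubgraph.neighborSet z, Set.range (csgLabel G k T y)) \
        Set.range (csgLabel G k T z)).ncard = 1 := by
    intro z hz
    have hrange : (Set.univ \ Set.range (csgLabel G k T z)).ncard = 1 := by
      rw [compl_ncard, range_label_ncard hT, hcard]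
      omega
    obtain ⟨m, hm⟩ := Set.ncard_eq_one.mp hrange
    have hDeq : (⋃ y ∈ P'.toSubgraph.neighborSet z, Set.range (csgLabel G k T y)) \
        Set.range (csgLabel G k T z) = {m} := by
      apply subset_antisymm
      · intro c hc
        rw [← hm]
        exact ⟨Set.mem_univ c, hc.2⟩
      · intro c hc
        rw [Set.mem_singleton_iff] at hc
        obtain ⟨y', hy'⟩ := exists_toSubgraph_adj P' hnil z hz
        have hadj : (CSG G k T).Adj z y' := hy'.adj_sub
        obtain ⟨γ, δ, t, ht, hγ, hδ, hoth, hts, hnr⟩ := csg_adj_elim hT hadj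
        have hbr : δ.1 t ∈ Set.range (csgLabel G k T y') := by
          rw [← hδ]
          exact ⟨⟨t, ht⟩, rfl⟩
        have hbnr : δ.1 t ∉ Set.range (csgLabel G k T z) := by
          rw [← hγ]
          rintro ⟨t', ht'⟩
          exact hnr t' ht'.symm
        have hbm : δ.1 t = m := by
          have : δ.1 t ∈ Set.univ \ Set.range (csgLabel G k T z) := ⟨Set.mem_univ _, hbnr⟩
          rw [hm] at this
          exact this
        rw [hc, ← hbm]
        exact ⟨Set.mem_iUnion₂.mpr ⟨y', hy', hbr⟩, hbnr⟩
    rw [hDeq]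
    exact Set.ncard_singleton m
  unfold walkWeight
  rw [Finset.sum_congr rfl (fun z hz => step z (List.mem_toFinset.mp hz))]
  rw [Finset.sum_const, smul_eq_mul, mul_one, List.toFinset_card_of_nodup hP'.support_nodup,
    Walk.length_support]

end UpWeight
end S18
namespace S18
open SimpleGraph

section Monster
variable {V : Type*} [DecidableEq V] {G : SimpleGraph V} {k : ℕ} {T : Set V} {v : V}

lemma adj_new_color {W : Type*} {G : SimpleGraph W} {k : ℕ} {T' : Set W} (hT : G.IsClique T')
    {x y : CSGNode G k T'} (h : (CSG G k T').Adj x y) :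
    ∃ b : Fin k, b ∈ Set.range (csgLabel G k T' y) ∧ b ∉ Set.range (csgLabel G k T' x) := by
  obtain ⟨γ, δ, t, ht, hγ, hδ, hoth, hts, hnr⟩ := csg_adj_elim hT h
  subst hγ hδ
  refine ⟨δ.1 t, ⟨⟨t, ht⟩, rfl⟩, ?_⟩
  rintro ⟨t', ht'⟩
  exact hnr t' ht'.symm

lemma horiz_vcolor (hT : G.IsClique T) (hv : v ∈ T) {x y : CSGNode G k T}
    (h : (CSG G k T).Adj x y) (hne : resC G k T v hv x ≠ resC G k T v hv y) :
    csgLabel G k T x ⟨v, hv⟩ = csgLabel G k T y ⟨v, hv⟩ := by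
  obtain ⟨γ, δ, t, ht, hγ, hδ, hoth, hts, -⟩ := csg_adj_elim hT h
  subst hγ hδ
  by_cases htv : t = v
  · exfalso
    apply hne
    have hre : restrictColoring G k (delSet v) γ = restrictColoring G k (delSet v) δ :=
      Subtype.ext (funext fun u => hoth u.1 (fun hc => u.2 (hc.trans htv)))
    rw [resC_mk, resC_mk, hre]
  · exact hoth v (fun hc => htv hc.symm)

/-- The central inequality: the length of a path upstairs is bounded by the
weight of its projection plus 2. -/
lemma weight_ineq (hforest : IsAcyclic (CSG G k T)) (hT : G.IsClique T) (hv : v ∈ T)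
    (hN : ∀ u : V, G.Adj v u → u ∈ T) (hk : 3 ≤ k)
    (hcard2 : (Tdel T v).ncard = k - 2)
    {x y : CSGNode G k T} (P' : (CSG G k T).Walk x y) (hP' : P'.IsPath) :
    P'.length + 1 ≤
      walkWeight (csgLabel (G.induce (delSet v)) k (Tdel T v)) (projW hT hv P') + 2 := by
  letI : DecidableEq (CSGNode G k T) := Classical.decEq _
  letI : DecidableEq (CSGNode (G.induce (delSet v)) k (Tdel T v)) := Classical.decEq _
  set Q := projW hT hv P' with hQdef
  have hQ : Q.IsPath := projW_isPath hforest hT hv hN hP'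
  have hW : walkWeight (csgLabel (G.induce (delSet v)) k (Tdel T v)) Q =
      ∑ d ∈ Q.support.toFinset,
        ((⋃ z ∈ Q.toSubgraph.neighborSet d,
            Set.range (csgLabel (G.induce (delSet v)) k (Tdel T v) z)) \
          Set.range (csgLabel (G.induce (delSet v)) k (Tdel T v) d)).ncard := rfl
  have hA : P'.length + 1 = P'.support.toFinset.card := by
    rw [List.toFinset_card_of_nodup hP'.support_nodup, Walk.length_support]
  have hmap : ∀ z ∈ P'.support.toFinset, resC G k T v hv z ∈ Q.support.toFinset := by
    intro z hz
    exact List.mem_toFinset.mpr (projW_support hT hv P' z (List.mem_toFinset.mp hz))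
  have hfib := Finset.card_eq_sum_card_fiberwise hmap
  -- the per-node bound
  have key : ∀ d ∈ Q.support.toFinset,
      (P'.support.toFinset.filter (fun z => resC G k T v hv z = d)).card ≤
        ((⋃ z ∈ Q.toSubgraph.neighborSet d,
            Set.range (csgLabel (G.induce (delSet v)) k (Tdel T v) z)) \
          Set.range (csgLabel (G.induce (delSet v)) k (Tdel T v) d)).ncard +
        ((if d = resC G k T v hv x then 1 else 0) + (if d = resC G k T v hv y then 1 else 0)) := by
    intro d hd
    have hdsup : d ∈ Q.support := List.mem_toFinset.mp hd
    set F := P'.support.toFinset.filter (fun z => resC G k T v hv z = d) with hFdef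
    set wt := ((⋃ z ∈ Q.toSubgraph.neighborSet d,
            Set.range (csgLabel (G.induce (delSet v)) k (Tdel T v) z)) \
          Set.range (csgLabel (G.induce (delSet v)) k (Tdel T v) d)).ncard with hwtdef
    have hfib2 : F.card ≤ 2 := by
      by_contra hgt
      push_neg at hgt
      obtain ⟨a, b, c, ha, hb, hc, hab, hac, hbc⟩ := Finset.two_lt_card_iff.mp hgt
      rw [hFdef, Finset.mem_filter] at ha hb hc
      have h1 := (adj_of_resC_eq hT hv hN hab (ha.2.trans hb.2.symm)).1
      have h2 := (adj_of_resC_eq hT hv hN hbc (hb.2.trans hc.2.symm)).1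
      have h3 := (adj_of_resC_eq hT hv hN hac.symm (hc.2.trans ha.2.symm)).1
      exact no_triangle hforest h1 h2 h3
    by_cases hQnil : Q.Nil
    · have hsupp : Q.support = [resC G k T v hv x] := Walk.nil_iff_support_eq.mp hQnil
      have hdx : d = resC G k T v hv x := by
        rw [hsupp] at hdsup
        exact List.mem_singleton.mp hdsup
      have hxy : resC G k T v hv x = resC G k T v hv y := hQnil.eq
      rw [if_pos hdx, if_pos (hdx.trans hxy)]
      omega
    · have hw1 : 1 ≤ wt := by
        obtain ⟨d', hd'⟩ := exists_toSubgraph_adj Q hQnil d hdsup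
        obtain ⟨b, hbr, hbnr⟩ := adj_new_color (Tdel_clique hT) hd'.adj_sub
        have hbD : b ∈ (⋃ z ∈ Q.toSubgraph.neighborSet d,
              Set.range (csgLabel (G.induce (delSet v)) k (Tdel T v) z)) \
            Set.range (csgLabel (G.induce (delSet v)) k (Tdel T v) d) :=
          ⟨Set.mem_iUnion₂.mpr ⟨d', hd', hbr⟩, hbnr⟩
        calc 1 = ({b} : Set (Fin k)).ncard := (Set.ncard_singleton b).symm
        _ ≤ wt := Set.ncard_le_ncard (Set.singleton_subset_iff.mpr hbD) (Set.toFinite _)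
      by_cases hde : d = resC G k T v hv x ∨ d = resC G k T v hv y
      · set i1 := (if d = resC G k T v hv x then 1 else 0) with hi1
        set i2 := (if d = resC G k T v hv y then 1 else 0) with hi2
        have hind : 1 ≤ i1 + i2 := by
          rcases hde with h | h
          · rw [hi1, if_pos h]; omega
          · rw [hi2, if_pos h]; omega
        omega
      · push_neg at hde
        obtain ⟨hdx, hdy⟩ := hde
        rw [if_neg hdx, if_neg hdy]
        by_cases hf1 : F.card ≤ 1
        · omega
        · -- |fiber| = 2, d internal: show wt ≥ 2
          have hf2 : F.card = 2 := by omega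
          -- set up the two neighbours of d on Q
          set Q1 := Q.takeUntil d hdsup with hQ1def
          set Q2 := Q.dropUntil d hdsup with hQ2def
          have hQ1p : Q1.IsPath := hQ.takeUntil hdsup
          have hQ2p : Q2.IsPath := hQ.dropUntil hdsup
          have hQ1nn : ¬ Q1.Nil := fun hn => hdx hn.eq.symm
          have hQ2nn : ¬ Q2.Nil := fun hn => hdy hn.eq
          obtain ⟨dnext, hadjn, q2, hq2⟩ := Walk.not_nil_iff.mp hQ2nn
          have edge2 : s(d, dnext) ∈ Q.edges := by
            apply Walk.edges_dropUntil_subset Q hdsup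
            rw [← hQ2def, hq2, Walk.edges_cons]
            exact List.mem_cons_self
          have hQ1rnn : ¬ Q1.reverse.Nil := fun hn => hdx hn.eq
          obtain ⟨dprev, hadjp, q1, hq1⟩ := Walk.not_nil_iff.mp hQ1rnn
          have edge1 : s(d, dprev) ∈ Q.edges := by
            apply Walk.edges_takeUntil_subset Q hdsup
            have hR : s(d, dprev) ∈ Q1.reverse.edges := by
              rw [hq1, Walk.edges_cons]
              exact List.mem_cons_self
            rw [Walk.edges_reverse] at hR
            exact List.mem_reverse.mp hR
          have hprevnext : dprev ≠ dnext := by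
            have hps : dprev ∈ Q1.support := by
              have h0 : dprev ∈ Q1.reverse.support := by
                rw [hq1, Walk.support_cons]
                exact List.mem_cons_of_mem _ (Walk.start_mem_support q1)
              rw [Walk.support_reverse, List.mem_reverse] at h0
              exact h0
            have hns : dnext ∈ Q2.support.tail := by
              rw [hq2, Walk.support_cons, List.tail_cons]
              exact Walk.start_mem_support q2
            have hsup := Walk.support_append Q1 Q2
            rw [Walk.take_spec Q hdsup] at hsup
            have hnodup := hQ.support_nodup
            rw [hsup] at hnodup
            intro hc
            exact (List.disjoint_of_nodup_append hnodup) hps (by rw [hc]; exact hns)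
          -- lift the two edges of Q to edges of P'
          obtain ⟨a1, b1, hab1, he1⟩ := projW_edges hT hv P' _ edge1
          obtain ⟨a2, b2, hab2, he2⟩ := projW_edges hT hv P' _ edge2
          obtain ⟨z1, w1, hzw1, hz1d, hw1p⟩ :
              ∃ z1 w1, s(z1, w1) ∈ P'.edges ∧ resC G k T v hv z1 = d ∧
                resC G k T v hv w1 = dprev := by
            rcases Sym2.eq_iff.mp he1 with ⟨h1, h2⟩ | ⟨h1, h2⟩
            · exact ⟨a1, b1, hab1, h1.symm, h2.symm⟩
            · exact ⟨b1, a1, by rwa [Sym2.eq_swap] at hab1, h1.symm, h2.symm⟩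
          obtain ⟨z2, w2, hzw2, hz2d, hw2p⟩ :
              ∃ z2 w2, s(z2, w2) ∈ P'.edges ∧ resC G k T v hv z2 = d ∧
                resC G k T v hv w2 = dnext := by
            rcases Sym2.eq_iff.mp he2 with ⟨h1, h2⟩ | ⟨h1, h2⟩
            · exact ⟨a2, b2, hab2, h1.symm, h2.symm⟩
            · exact ⟨b2, a2, by rwa [Sym2.eq_swap] at hab2, h1.symm, h2.symm⟩
          have hz1s : z1 ∈ P'.support := P'.fst_mem_support_of_mem_edges hzw1
          have hz2s : z2 ∈ P'.support := P'.fst_mem_support_of_mem_edges hzw2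
          have hz1F : z1 ∈ F := by
            rw [hFdef, Finset.mem_filter]
            exact ⟨List.mem_toFinset.mpr hz1s, hz1d⟩
          have hz2F : z2 ∈ F := by
            rw [hFdef, Finset.mem_filter]
            exact ⟨List.mem_toFinset.mpr hz2s, hz2d⟩
          have hzz : z1 ≠ z2 := by
            intro hzzeq
            subst hzzeq
            -- find the other fiber element and derive three edges at z1
            obtain ⟨u1, u2, hu12, hFpair⟩ := Finset.card_eq_two.mp hf2
            have hz1p : z1 ∈ ({u1, u2} : Finset _) := hFpair ▸ hz1F
            have hother : ∃ z', z' ∈ F ∧ z' ≠ z1 := by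
              rw [Finset.mem_insert, Finset.mem_singleton] at hz1p
              rcases hz1p with rfl | rfl
              · exact ⟨u2, hFpair ▸ (by simp), hu12.symm⟩
              · exact ⟨u1, hFpair ▸ (by simp), hu12⟩
            obtain ⟨z', hz'F, hz'ne⟩ := hother
            rw [hFdef, Finset.mem_filter] at hz'F
            have hz's : z' ∈ P'.support := List.mem_toFinset.mp hz'F.1
            have hadjzz' : (CSG G k T).Adj z1 z' :=
              ((adj_of_resC_eq hT hv hN hz'ne.symm (hz1d.trans hz'F.2.symm)).1)
            have he3 : s(z1, z') ∈ P'.edges :=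
              edge_mem_of_adj hforest hP' hz1s hz's hadjzz'
            have hrw1 : resC G k T v hv w1 ≠ d := by rw [hw1p]; exact fun hc => hadjp.ne' hc
            have hrw2 : resC G k T v hv w2 ≠ d := by rw [hw2p]; exact fun hc => hadjn.ne' hc
            have hE12 : s(z1, w1) ≠ s(z1, w2) := by
              intro hc
              rcases Sym2.eq_iff.mp hc with ⟨-, h2⟩ | ⟨h1, h2⟩
              · exact hprevnext (by rw [← hw1p, h2, hw2p])
              · exact hrw2 (by rw [← h1, hz1d])
            have hE13 : s(z1, w1) ≠ s(z1, z') := by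
              intro hc
              rcases Sym2.eq_iff.mp hc with ⟨-, h2⟩ | ⟨h1, h2⟩
              · exact hrw1 (by rw [h2, hz'F.2])
              · exact hrw1 (by rw [h2, hz1d])
            have hE23 : s(z1, w2) ≠ s(z1, z') := by
              intro hc
              rcases Sym2.eq_iff.mp hc with ⟨-, h2⟩ | ⟨h1, h2⟩
              · exact hrw2 (by rw [h2, hz'F.2])
              · exact hrw2 (by rw [h2, hz1d])
            exact no_three hP' hzw1 hzw2 he3 hE12 hE13 hE23
              (Sym2.mem_mk_left _ _) (Sym2.mem_mk_left _ _) (Sym2.mem_mk_left _ _)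
          obtain ⟨hadj12, hvne⟩ :=
            adj_of_resC_eq hT hv hN hzz (hz1d.trans hz2d.symm)
          set a := csgLabel G k T z1 ⟨v, hv⟩ with hadef
          set b := csgLabel G k T z2 ⟨v, hv⟩ with hbdef
          -- vcolors of the outer endpoints
          have haw1 : csgLabel G k T w1 ⟨v, hv⟩ = a := by
            refine (horiz_vcolor hT hv (P'.adj_of_mem_edges hzw1) ?_).symm
            rw [hz1d, hw1p]
            exact fun hc => hadjp.ne' hc.symm
          have hbw2 : csgLabel G k T w2 ⟨v, hv⟩ = b := by
            refine (horiz_vcolor hT hv (P'.adj_of_mem_edges hzw2) ?_).symm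
            rw [hz2d, hw2p]
            exact fun hc => hadjn.ne' hc.symm
          have hanp : a ∉ Set.range (csgLabel (G.induce (delSet v)) k (Tdel T v) dprev) := by
            rw [← haw1, ← hw1p]
            exact vcolor_not_mem hT hv w1
          have hbnn : b ∉ Set.range (csgLabel (G.induce (delSet v)) k (Tdel T v) dnext) := by
            rw [← hbw2, ← hw2p]
            exact vcolor_not_mem hT hv w2
          have hand : a ∉ Set.range (csgLabel (G.induce (delSet v)) k (Tdel T v) d) := by
            rw [← hz1d]
            exact vcolor_not_mem hT hv z1
          have hbnd : b ∉ Set.range (csgLabel (G.induce (delSet v)) k (Tdel T v) d) := by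
            rw [← hz2d]
            exact vcolor_not_mem hT hv z2
          have hFcard : (Set.univ \
              Set.range (csgLabel (G.induce (delSet v)) k (Tdel T v) d)).ncard = 2 := by
            rw [compl_ncard, range_label_ncard (Tdel_clique hT), hcard2]
            omega
          have hFsub : ({a, b} : Set (Fin k)) ⊆
              Set.univ \ Set.range (csgLabel (G.induce (delSet v)) k (Tdel T v) d) := by
            rintro c (rfl | rfl)
            · exact ⟨Set.mem_univ _, hand⟩
            · exact ⟨Set.mem_univ _, hbnd⟩
          have hFeq : ({a, b} : Set (Fin k)) =
              Set.univ \ Set.range (csgLabel (G.induce (delSet v)) k (Tdel T v) d) :=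
            Set.eq_of_subset_of_ncard_le hFsub
              (by rw [hFcard, Set.ncard_pair hvne]) (Set.toFinite _)
          obtain ⟨β1, hβ1r, hβ1nr⟩ := adj_new_color (Tdel_clique hT) hadjp
          obtain ⟨β2, hβ2r, hβ2nr⟩ := adj_new_color (Tdel_clique hT) hadjn
          have hβ1b : β1 = b := by
            have : β1 ∈ ({a, b} : Set (Fin k)) := by
              rw [hFeq]
              exact ⟨Set.mem_univ _, hβ1nr⟩
            rcases this with rfl | rfl
            · exact absurd hβ1r hanp
            · rfl
          have hβ2a : β2 = a := by
            have : β2 ∈ ({a, b} : Set (Fin k)) := by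
              rw [hFeq]
              exact ⟨Set.mem_univ _, hβ2nr⟩
            rcases this with rfl | rfl
            · rfl
            · exact absurd hβ2r hbnn
          have htS1 : Q.toSubgraph.Adj d dprev :=
            (Subgraph.mem_edgeSet).mp ((Walk.mem_edges_toSubgraph Q).mpr edge1)
          have htS2 : Q.toSubgraph.Adj d dnext :=
            (Subgraph.mem_edgeSet).mp ((Walk.mem_edges_toSubgraph Q).mpr edge2)
          have hpair : ({b, a} : Set (Fin k)) ⊆
              (⋃ z ∈ Q.toSubgraph.neighborSet d,
                Set.range (csgLabel (G.induce (delSet v)) k (Tdel T v) z)) \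
              Set.range (csgLabel (G.induce (delSet v)) k (Tdel T v) d) := by
            rintro c (rfl | rfl)
            · exact ⟨Set.mem_iUnion₂.mpr ⟨dprev, htS1, hβ1b ▸ hβ1r⟩, hbnd⟩
            · exact ⟨Set.mem_iUnion₂.mpr ⟨dnext, htS2, hβ2a ▸ hβ2r⟩, hand⟩
          have h2wt : 2 ≤ wt := by
            calc 2 = ({b, a} : Set (Fin k)).ncard := (Set.ncard_pair hvne.symm).symm
            _ ≤ wt := Set.ncard_le_ncard hpair (Set.toFinite _)
          omega
  -- sum everything up
  have hsum := Finset.sum_le_sum key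
  rw [Finset.sum_add_distrib, Finset.sum_add_distrib] at hsum
  have hs1 : (∑ d ∈ Q.support.toFinset, if d = resC G k T v hv x then 1 else 0) = 1 := by
    rw [Finset.sum_ite_eq' Q.support.toFinset (resC G k T v hv x) (fun _ => 1)]
    rw [if_pos (List.mem_toFinset.mpr (Walk.start_mem_support Q))]
  have hs2 : (∑ d ∈ Q.support.toFinset, if d = resC G k T v hv y then 1 else 0) = 1 := by
    rw [Finset.sum_ite_eq' Q.support.toFinset (resC G k T v hv y) (fun _ => 1)]
    rw [if_pos (List.mem_toFinset.mpr (Walk.end_mem_support Q))]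
  rw [hs1, hs2] at hsum
  rw [hA, hfib, hW]
  omega

end Monster
end S18
namespace S18
open SimpleGraph

section LiftCycle
variable {V : Type*} [DecidableEq V] {G : SimpleGraph V} {k : ℕ} {T : Set V} {v : V}

lemma label_at {w : V} (hw : w ∈ T) (γ : {f : V → Fin k // IsColoring G k f}) :
    csgLabel G k T (csgNode G k T γ) ⟨w, hw⟩ = γ.1 w := rfl

lemma resC_mk_ext (hv : v ∈ T)
    (δ : {f : ↥(delSet v) → Fin k // IsColoring (G.induce (delSet v)) k f}) (c : Fin k)
    (h : IsColoring G k (extFun v δ.1 c)) :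
    resC G k T v hv (csgNode G k T ⟨extFun v δ.1 c, h⟩) =
      csgNode (G.induce (delSet v)) k (Tdel T v) δ := by
  rw [resC_mk]
  congr 1
  exact Subtype.ext (res_ext h)

lemma vert_adj (hv : v ∈ T)
    (δ : {f : ↥(delSet v) → Fin k // IsColoring (G.induce (delSet v)) k f}) {c c' : Fin k}
    (hcc' : c ≠ c') (h1 : IsColoring G k (extFun v δ.1 c))
    (h2 : IsColoring G k (extFun v δ.1 c')) :
    (CSG G k T).Adj (csgNode G k T ⟨extFun v δ.1 c, h1⟩)
      (csgNode G k T ⟨extFun v δ.1 c', h2⟩) := by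
  refine ⟨?_, _, _, rfl, rfl, ?_⟩
  · intro hc
    have h0 := congrArg (fun z => csgLabel G k T z ⟨v, hv⟩) hc
    replace h0 : extFun v δ.1 c v = extFun v δ.1 c' v := h0
    rw [extFun_v, extFun_v] at h0
    exact hcc' h0
  · refine ⟨v, ?_, ?_⟩
    · show extFun v δ.1 c v ≠ extFun v δ.1 c' v
      rw [extFun_v, extFun_v]
      exact hcc'
    · intro u hu
      by_contra huv
      replace hu : extFun v δ.1 c u ≠ extFun v δ.1 c' u := hu
      rw [extFun_mem _ _ huv, extFun_mem _ _ huv] at hu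
      exact hu rfl

lemma horiz_adj_ext (hv : v ∈ T)
    (δ1 δ2 : {f : ↥(delSet v) → Fin k // IsColoring (G.induce (delSet v)) k f})
    (t : ↥(delSet v)) (ht : t ∈ Tdel T v) (hdiff : δ1.1 t ≠ δ2.1 t)
    (hoth : ∀ u : ↥(delSet v), u ≠ t → δ1.1 u = δ2.1 u) (c : Fin k)
    (h1 : IsColoring G k (extFun v δ1.1 c)) (h2 : IsColoring G k (extFun v δ2.1 c)) :
    (CSG G k T).Adj (csgNode G k T ⟨extFun v δ1.1 c, h1⟩)
      (csgNode G k T ⟨extFun v δ2.1 c, h2⟩) := by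
  refine ⟨?_, _, _, rfl, rfl, ?_⟩
  · intro hc
    have h0 := congrArg (fun z => csgLabel G k T z ⟨t.1, ht⟩) hc
    replace h0 : extFun v δ1.1 c t.1 = extFun v δ2.1 c t.1 := h0
    rw [extFun_mem _ _ t.2, extFun_mem _ _ t.2] at h0
    exact hdiff (by simpa using h0)
  · refine ⟨t.1, ?_, ?_⟩
    · show extFun v δ1.1 c t.1 ≠ extFun v δ2.1 c t.1
      rw [extFun_mem _ _ t.2, extFun_mem _ _ t.2]
      simpa using hdiff
    · intro u hu
      by_contra hut
      by_cases huv : u = v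
      · replace hu : extFun v δ1.1 c u ≠ extFun v δ2.1 c u := hu
        rw [huv, extFun_v, extFun_v] at hu
        exact hu rfl
      · replace hu : extFun v δ1.1 c u ≠ extFun v δ2.1 c u := hu
        rw [extFun_mem _ _ huv, extFun_mem _ _ huv] at hu
        exact hu (hoth ⟨u, huv⟩ (fun hc => hut (congrArg Subtype.val hc)))

end LiftCycle
end S18
namespace S18
open SimpleGraph

section LiftWalk
variable {V : Type*} [DecidableEq V] {G : SimpleGraph V} {k : ℕ} {T : Set V} {v : V}

lemma shared_color (hT : G.IsClique T) (hk : 3 ≤ k) (hcard2 : (Tdel T v).ncard = k - 2)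
    {e m : CSGNode (G.induce (delSet v)) k (Tdel T v)}
    (γ' δ' : {f : ↥(delSet v) → Fin k // IsColoring (G.induce (delSet v)) k f})
    (t : ↥(delSet v)) (ht : t ∈ Tdel T v)
    (hγ' : csgNode (G.induce (delSet v)) k (Tdel T v) γ' = e)
    (hδ' : csgNode (G.induce (delSet v)) k (Tdel T v) δ' = m)
    (hoth : ∀ u : ↥(delSet v), u ≠ t → γ'.1 u = δ'.1 u)
    (hnr : ∀ t' : (Tdel T v), δ'.1 t ≠ γ'.1 t'.1) :
    ∃ s' : Fin k, s' ∉ Set.range (csgLabel (G.induce (delSet v)) k (Tdel T v) e) ∧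
      s' ∉ Set.range (csgLabel (G.induce (delSet v)) k (Tdel T v) m) ∧ s' ≠ δ'.1 t := by
  have hFcard : (Set.univ \
      Set.range (csgLabel (G.induce (delSet v)) k (Tdel T v) e)).ncard = 2 := by
    rw [compl_ncard, range_label_ncard (Tdel_clique hT), hcard2]
    omega
  have hbe : δ'.1 t ∉ Set.range (csgLabel (G.induce (delSet v)) k (Tdel T v) e) := by
    rw [← hγ']
    rintro ⟨t', ht'⟩
    exact hnr t' ht'.symm
  obtain ⟨p1, p2, hp12, hFeq⟩ := Set.ncard_eq_two.mp hFcard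
  have hbF : δ'.1 t ∈ ({p1, p2} : Set (Fin k)) := by
    rw [← hFeq]
    exact ⟨Set.mem_univ _, hbe⟩
  have hs' : ∃ s', s' ∈ ({p1, p2} : Set (Fin k)) ∧ s' ≠ δ'.1 t := by
    rcases hbF with hb1 | hb2
    · exact ⟨p2, Or.inr rfl, fun hc => hp12 (hb1 ▸ hc ▸ rfl)⟩
    · rw [Set.mem_singleton_iff] at hb2
      exact ⟨p1, Or.inl rfl, fun hc => hp12 (hb2 ▸ hc ▸ rfl)⟩
  obtain ⟨s', hs'F, hs'b⟩ := hs'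
  have hs'e : s' ∉ Set.range (csgLabel (G.induce (delSet v)) k (Tdel T v) e) := by
    have : s' ∈ Set.univ \ Set.range (csgLabel (G.induce (delSet v)) k (Tdel T v) e) := by
      rw [hFeq]; exact hs'F
    exact this.2
  refine ⟨s', hs'e, ?_, hs'b⟩
  rw [← hδ']
  rintro ⟨t'', ht''⟩
  by_cases htt : t''.1 = t
  · apply hs'b
    rw [← ht'']
    show δ'.1 t''.1 = δ'.1 t
    rw [htt]
  · apply hs'e
    rw [← hγ']
    refine ⟨t'', ?_⟩
    show γ'.1 t''.1 = s'
    rw [hoth t''.1 htt]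
    exact ht''

lemma lift_walk (hT : G.IsClique T) (hv : v ∈ T) (hN : ∀ u : V, G.Adj v u → u ∈ T)
    (hk : 3 ≤ k) (hcard2 : (Tdel T v).ncard = k - 2)
    {e f : CSGNode (G.induce (delSet v)) k (Tdel T v)}
    (W : (CSG (G.induce (delSet v)) k (Tdel T v)).Walk e f) :
    ∀ (δ : {f' : ↥(delSet v) → Fin k // IsColoring (G.induce (delSet v)) k f'})
      (_ : csgNode (G.induce (delSet v)) k (Tdel T v) δ = e)
      (c : Fin k) (hc : IsColoring G k (extFun v δ.1 c)),
      ∃ (Y : CSGNode G k T) (U : (CSG G k T).Walk (csgNode G k T ⟨extFun v δ.1 c, hc⟩) Y),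
        resC G k T v hv Y = f ∧
        ∀ a b : CSGNode G k T, s(a, b) ∈ U.edges →
          resC G k T v hv a = resC G k T v hv b ∨
          s(resC G k T v hv a, resC G k T v hv b) ∈ W.edges := by
  induction W with
  | nil =>
    intro δ hδ c hc
    refine ⟨_, Walk.nil, ?_, ?_⟩
    · rw [resC_mk_ext hv δ c hc]
      exact hδ
    · intro a b hab
      simp at hab
  | @cons e m f h W' ih =>
    intro δ hδ c hc
    obtain ⟨γ', δ', t, ht, hγ', hδ', hoth, hts, hnr⟩ := csg_adj_elim (Tdel_clique hT) h
    have hcr : c ∉ Set.range (csgLabel (G.induce (delSet v)) k (Tdel T v) e) := by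
      rw [← hδ]
      exact (extFun_coloring_iff' hT hv hN δ c).mp hc
    have hcr2 : c ∉ Set.range (fun t' : (Tdel T v) => γ'.1 t'.1) := by
      rw [← hγ'] at hcr
      exact hcr
    have hc2 : IsColoring G k (extFun v γ'.1 c) :=
      (extFun_coloring_iff' hT hv hN γ' c).mpr hcr2
    have hnodeq : csgNode G k T ⟨extFun v δ.1 c, hc⟩ =
        csgNode G k T ⟨extFun v γ'.1 c, hc2⟩ := by
      apply same_up_comp hv hN
      · have e1 : restrictColoring G k (delSet v) ⟨extFun v δ.1 c, hc⟩ = δ :=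
          Subtype.ext (res_ext hc)
        have e2 : restrictColoring G k (delSet v) ⟨extFun v γ'.1 c, hc2⟩ = γ' :=
          Subtype.ext (res_ext hc2)
        rw [e1, e2, hδ, hγ']
      · show extFun v δ.1 c v = extFun v γ'.1 c v
        rw [extFun_v, extFun_v]
    by_cases hcm : c ∈ Set.range (csgLabel (G.induce (delSet v)) k (Tdel T v) m)
    · -- need to switch the color of v first
      obtain ⟨s', hs'e, hs'm, hs'b⟩ := shared_color hT hk hcard2 γ' δ' t ht hγ' hδ' hoth hnr
      -- c must equal δ'.1 t
      have hcb : c = δ'.1 t := by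
        obtain ⟨t'', ht''⟩ := hcm
        rw [← hδ'] at ht''
        replace ht'' : δ'.1 t''.1 = c := ht''
        by_cases htt : t''.1 = t
        · rw [← ht'', htt]
        · exfalso
          apply hcr
          rw [← hγ']
          exact ⟨t'', by show γ'.1 t''.1 = c; rw [hoth t''.1 htt]; exact ht''⟩
      have hs'c : s' ≠ c := fun hcq => hs'b (hcq.trans hcb)
      have hcs1 : IsColoring G k (extFun v γ'.1 s') :=
        (extFun_coloring_iff' hT hv hN γ' s').mpr (by rw [← hγ'] at hs'e; exact hs'e)
      have hcs2 : IsColoring G k (extFun v δ'.1 s') :=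
        (extFun_coloring_iff' hT hv hN δ' s').mpr (by rw [← hδ'] at hs'm; exact hs'm)
      have hvert : (CSG G k T).Adj (csgNode G k T ⟨extFun v γ'.1 c, hc2⟩)
          (csgNode G k T ⟨extFun v γ'.1 s', hcs1⟩) := vert_adj hv γ' (Ne.symm hs'c) hc2 hcs1
      have hhor : (CSG G k T).Adj (csgNode G k T ⟨extFun v γ'.1 s', hcs1⟩)
          (csgNode G k T ⟨extFun v δ'.1 s', hcs2⟩) :=
        horiz_adj_ext hv γ' δ' t ht hts hoth s' hcs1 hcs2
      obtain ⟨Y, U', hYf, hUed⟩ := ih δ' hδ' s' hcs2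
      refine ⟨Y, (Walk.cons hvert (Walk.cons hhor U')).copy hnodeq.symm rfl, hYf, ?_⟩
      intro a b hab
      rw [Walk.edges_copy, Walk.edges_cons, Walk.edges_cons, List.mem_cons,
        List.mem_cons] at hab
      rcases hab with hab | hab | hab
      · left
        have := congrArg (Sym2.map (resC G k T v hv)) hab
        rw [Sym2.map_pair_eq, Sym2.map_pair_eq, resC_mk_ext hv, resC_mk_ext hv] at this
        rcases Sym2.eq_iff.mp this with ⟨h1, h2⟩ | ⟨h1, h2⟩
        · rw [h1, h2]
        · rw [h1, h2]
      · right
        have := congrArg (Sym2.map (resC G k T v hv)) hab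
        rw [Sym2.map_pair_eq, Sym2.map_pair_eq, resC_mk_ext hv, resC_mk_ext hv,
          hγ', hδ'] at this
        rw [this, Walk.edges_cons]
        exact List.mem_cons_self
      · rcases hUed a b hab with h1 | h1
        · exact Or.inl h1
        · exact Or.inr (by rw [Walk.edges_cons]; exact List.mem_cons_of_mem _ h1)
    · -- keep the same color
      have hc3 : IsColoring G k (extFun v δ'.1 c) :=
        (extFun_coloring_iff' hT hv hN δ' c).mpr (by rw [← hδ'] at hcm; exact hcm)
      have hhor : (CSG G k T).Adj (csgNode G k T ⟨extFun v γ'.1 c, hc2⟩)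
          (csgNode G k T ⟨extFun v δ'.1 c, hc3⟩) :=
        horiz_adj_ext hv γ' δ' t ht hts hoth c hc2 hc3
      obtain ⟨Y, U', hYf, hUed⟩ := ih δ' hδ' c hc3
      refine ⟨Y, (Walk.cons hhor U').copy hnodeq.symm rfl, hYf, ?_⟩
      intro a b hab
      rw [Walk.edges_copy, Walk.edges_cons, List.mem_cons] at hab
      rcases hab with hab | hab
      · right
        have := congrArg (Sym2.map (resC G k T v hv)) hab
        rw [Sym2.map_pair_eq, Sym2.map_pair_eq, resC_mk_ext hv, resC_mk_ext hv,
          hγ', hδ'] at this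
        rw [this, Walk.edges_cons]
        exact List.mem_cons_self
      · rcases hUed a b hab with h1 | h1
        · exact Or.inl h1
        · exact Or.inr (by rw [Walk.edges_cons]; exact List.mem_cons_of_mem _ h1)

lemma down_cycle_absurd (hforest : IsAcyclic (CSG G k T)) (hT : G.IsClique T) (hv : v ∈ T)
    (hN : ∀ u : V, G.Adj v u → u ∈ T) (hk : 3 ≤ k) (hcard2 : (Tdel T v).ncard = k - 2)
    (hncyc : ¬ IsAcyclic (CSG (G.induce (delSet v)) k (Tdel T v))) : False := by
  unfold SimpleGraph.IsAcyclic at hncyc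
  push_neg at hncyc
  obtain ⟨d0, C, hC⟩ := hncyc
  cases C with
  | nil => exact ((Walk.isCycle_def _).mp hC).2.1 rfl
  | @cons _ m _ h q =>
    have hqpath : q.IsPath := by
      rw [Walk.isPath_def]
      have h3 := ((Walk.isCycle_def _).mp hC).2.2
      rwa [Walk.support_cons, List.tail_cons] at h3
    have hedges := ((Walk.isCycle_def _).mp hC).1.edges_nodup
    rw [Walk.edges_cons] at hedges
    have hnotin : s(d0, m) ∉ q.edges := (List.nodup_cons.mp hedges).1
    obtain ⟨γ', δ', t, ht, hγ', hδ', hoth, hts, hnr⟩ := csg_adj_elim (Tdel_clique hT) h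
    obtain ⟨s', hs'e, hs'm, hs'b⟩ := shared_color hT hk hcard2 γ' δ' t ht hγ' hδ' hoth hnr
    have hA : IsColoring G k (extFun v γ'.1 s') :=
      (extFun_coloring_iff' hT hv hN γ' s').mpr (by rw [← hγ'] at hs'e; exact hs'e)
    have hB : IsColoring G k (extFun v δ'.1 s') :=
      (extFun_coloring_iff' hT hv hN δ' s').mpr (by rw [← hδ'] at hs'm; exact hs'm)
    set A := csgNode G k T ⟨extFun v γ'.1 s', hA⟩ with hAdef
    set B := csgNode G k T ⟨extFun v δ'.1 s', hB⟩ with hBdef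
    have hAB : (CSG G k T).Adj A B := horiz_adj_ext hv γ' δ' t ht hts hoth s' hA hB
    have hresA : resC G k T v hv A = d0 := by rw [hAdef, resC_mk_ext hv]; exact hγ'
    have hresB : resC G k T v hv B = m := by rw [hBdef, resC_mk_ext hv]; exact hδ'
    have hd0m : d0 ≠ m := h.ne
    have hbr := (isAcyclic_iff_forall_adj_isBridge.mp hforest) hAB
    rw [isBridge_iff] at hbr
    obtain ⟨Y, U, hYd0, hUed⟩ := lift_walk hT hv hN hk hcard2 q δ' hδ' s' hB
    -- a walk from B to A avoiding s(A, B)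
    have hedge_ok : ∀ a b : CSGNode G k T, s(a, b) ∈ U.edges → s(a, b) ≠ s(A, B) := by
      intro a b hab hc
      rcases hUed a b hab with h1 | h1
      · rcases Sym2.eq_iff.mp hc with ⟨rfl, rfl⟩ | ⟨rfl, rfl⟩
        · rw [hresA, hresB] at h1; exact hd0m h1
        · rw [hresA, hresB] at h1; exact hd0m h1.symm
      · apply hnotin
        rcases Sym2.eq_iff.mp hc with ⟨rfl, rfl⟩ | ⟨rfl, rfl⟩
        · rwa [hresA, hresB] at h1
        · rw [hresA, hresB] at h1
          rwa [Sym2.eq_swap] at h1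
    by_cases hYA : Y = A
    · have hreach : ((CSG G k T).deleteEdges {s(A, B)}).Reachable B A := by
        refine ⟨(U.copy rfl hYA).toDeleteEdges _ ?_⟩
        intro e he
        rw [Walk.edges_copy] at he
        rw [Set.mem_singleton_iff]
        induction e with
        | _ a b => exact hedge_ok a b he
      exact hbr hreach.symm
    · have hadjYA : (CSG G k T).Adj Y A :=
        (adj_of_resC_eq hT hv hN hYA (by rw [hYd0, hresA])).1
      have hreach : ((CSG G k T).deleteEdges {s(A, B)}).Reachable B A := by
        refine ⟨(U.append (Walk.cons hadjYA Walk.nil)).toDeleteEdges _ ?_⟩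
        intro e he
        rw [Walk.edges_append] at he
        rw [Set.mem_singleton_iff]
        rcases List.mem_append.mp he with he | he
        · induction e with
          | _ a b => exact hedge_ok a b he
        · rw [Walk.edges_cons, Walk.edges_nil] at he
          rw [List.mem_singleton] at he
          subst he
          intro hc
          rcases Sym2.eq_iff.mp hc with ⟨h1, h2⟩ | ⟨h1, h2⟩
          · exact hYA h1
          · rw [h1, hresB] at hYd0
            exact hd0m hYd0.symm
      exact hbr hreach.symm

end LiftWalk
end S18
/-- (introduce step for essential information) suppose `(G,T)` is
obtained from `(G−v, T∖{v})` by an introduce operation and `C^c_k(G,T)` is a forest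
with unique `α`-`β`-path `P'`. If `C^c_k(G−v, T∖{v})` is a forest with a unique path
`P` from the `α''`-node to the `β''`-node, then `w(P') ≤ w(P) + 2`; otherwise
`w(P') = 0`. -/
theorem statement_18 {V : Type} [Fintype V] [DecidableEq V] (G : SimpleGraph V)
    (k : ℕ) (hk : 3 ≤ k) (hconn : LConnected G (k - 2)) (hchord : Chordal G)
    (hcol : ∃ α : V → Fin k, IsColoring G k α)
    (T : Set V) (hT : G.IsClique T) (hTne : T ≠ Set.univ) (v : V) (hv : v ∈ T)
    (hN : ∀ u : V, G.Adj v u → u ∈ T)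
    (α β : {f : V → Fin k // IsColoring G k f})
    (hforest : IsAcyclic (CSG G k T))
    (P' : (CSG G k T).Walk (csgNode G k T α) (csgNode G k T β)) (hP' : P'.IsPath) :
    (IsAcyclic (CSG (G.induce (delSet v)) k (Tdel T v)) →
      ∀ P : (CSG (G.induce (delSet v)) k (Tdel T v)).Walk
          (csgNode (G.induce (delSet v)) k (Tdel T v) (restrictColoring G k (delSet v) α))
          (csgNode (G.induce (delSet v)) k (Tdel T v) (restrictColoring G k (delSet v) β)),
        P.IsPath →
        walkWeight (csgLabel G k T) P' ≤
          walkWeight (csgLabel (G.induce (delSet v)) k (Tdel T v)) P + 2) ∧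
    (¬ (IsAcyclic (CSG (G.induce (delSet v)) k (Tdel T v)) ∧
        (CSG (G.induce (delSet v)) k (Tdel T v)).Reachable
          (csgNode (G.induce (delSet v)) k (Tdel T v) (restrictColoring G k (delSet v) α))
          (csgNode (G.induce (delSet v)) k (Tdel T v) (restrictColoring G k (delSet v) β))) →
      walkWeight (csgLabel G k T) P' = 0) := by
  classical
  constructor
  · -- first conjunct
    intro hacyc P hP
    by_cases hnil : P'.Nil
    · rw [S18.walkWeight_nil_walk _ _ hnil]
      exact Nat.zero_le _
    · obtain ⟨x1, hadj1, P1, hP1⟩ := SimpleGraph.Walk.not_nil_iff.mp hnil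
      have hTcard : T.ncard = k - 1 := by
        have h1 := (S18.T_ncard_lower hconn hTne hv hN).1
        have h2 := S18.up_edge_Tcard hT hadj1
        omega
      have hcard2 : (Tdel T v).ncard = k - 2 := by
        rw [S18.Tdel_ncard, (S18.T_ncard_lower hconn hTne hv hN).2, hTcard]
        omega
      rw [S18.up_weight hT hTcard hk P' hP' hnil]
      have hineq := S18.weight_ineq hforest hT hv hN hk hcard2 P' hP'
      have hQpath := S18.projW_isPath hforest hT hv hN hP'
      have hPQ : P = S18.projW hT hv P' := by
        have huniq := (isAcyclic_iff_path_unique.mp hacyc) ⟨P, hP⟩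
          ⟨S18.projW hT hv P', hQpath⟩
        exact congrArg Subtype.val huniq
      rw [hPQ]
      exact hineq
  · -- second conjunct
    intro hnot
    by_cases hnil : P'.Nil
    · exact S18.walkWeight_nil_walk _ _ hnil
    · exfalso
      have hreach : (CSG (G.induce (delSet v)) k (Tdel T v)).Reachable
          (csgNode (G.induce (delSet v)) k (Tdel T v) (restrictColoring G k (delSet v) α))
          (csgNode (G.induce (delSet v)) k (Tdel T v) (restrictColoring G k (delSet v) β)) :=
        ⟨S18.projW hT hv P'⟩
      have hnacyc : ¬ IsAcyclic (CSG (G.induce (delSet v)) k (Tdel T v)) :=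
        fun hacyc => hnot ⟨hacyc, hreach⟩
      obtain ⟨x1, hadj1, P1, hP1⟩ := SimpleGraph.Walk.not_nil_iff.mp hnil
      have hTcard : T.ncard = k - 1 := by
        have h1 := (S18.T_ncard_lower hconn hTne hv hN).1
        have h2 := S18.up_edge_Tcard hT hadj1
        omega
      have hcard2 : (Tdel T v).ncard = k - 2 := by
        rw [S18.Tdel_ncard, (S18.T_ncard_lower hconn hTne hv hN).2, hTcard]
        omega
      exact S18.down_cycle_absurd hforest hT hv hN hk hcard2 hnacyc
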